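/- For q ∈ (0, 1/2), let ρ_q be the 2×2 density matrix [[1−q, √(q(1−q))],[√(q(1−q)), q]] with pinching Πρ_q = diag(1−q, q). Then D(ρ_q‖Πρ_q) = −q log q − (1−q) log(1−q), the BKM form equals Tr[B_q* Ω_{A_q,C_q}⁻¹(B_q)] = q(1−q)·L(1−q, q) where A_q = (1−q), C_q = (q), B_q = (√(q(1−q))), and the ratio D(ρ_q‖Πρ_q) / (q(1−q)·L(1−q,q)) tends to 1 as q → 0⁺. -/

import Mathlib

open Matrix MeasureTheory
open scoped ComplexOrder

noncomputable section

/-- Matrix logarithm of a Hermitian matrix via functional calculus on its eigenvalues,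
with the convention `log 0 = 0` (since `Real.log 0 = 0`); junk value `0` on
non-Hermitian matrices. -/
def mlog {m : Type*} [Fintype m] [DecidableEq m] (M : Matrix m m ℂ) : Matrix m m ℂ :=
  open scoped Classical in
  if h : M.IsHermitian then
    (h.eigenvectorUnitary : Matrix m m ℂ) *
      Matrix.diagonal (fun i => (Real.log (h.eigenvalues i) : ℂ)) *
      (h.eigenvectorUnitary : Matrix m m ℂ)ᴴ
  else 0

/-- Umegaki quantum relative entropy `D(ρ‖σ) = Tr[ρ (log ρ − log σ)]`. -/
def relEnt {m : Type*} [Fintype m] [DecidableEq m] (ρ σ : Matrix m m ℂ) : ℝ :=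
  ((ρ * (mlog ρ - mlog σ)).trace).re

attribute [local instance] Matrix.frobeniusNormedAddCommGroup Matrix.frobeniusNormedSpace

/-- BKM kernel `Ω_{A,C}⁻¹(B) = ∫₀^∞ (A+rI)⁻¹ B (C+rI)⁻¹ dr` (Bochner integral). -/
def Omega {dP dQ : ℕ} (A : Matrix (Fin dP) (Fin dP) ℂ) (C : Matrix (Fin dQ) (Fin dQ) ℂ)
    (B : Matrix (Fin dP) (Fin dQ) ℂ) : Matrix (Fin dP) (Fin dQ) ℂ :=
  ∫ r in Set.Ioi (0 : ℝ), (A + r • 1)⁻¹ * B * (C + r • 1)⁻¹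
/-- The inverse logarithmic mean `L(a,c)`. -/
def Lmean (a c : ℝ) : ℝ :=
  if a = c then 1 / a else (Real.log a - Real.log c) / (a - c)

/-- The pure-state family `ρ_q = [[1−q, √(q(1−q))],[√(q(1−q)), q]]`. -/
def rhoq (q : ℝ) : Matrix (Fin 2) (Fin 2) ℂ :=
  !![((1 - q : ℝ) : ℂ), ((Real.sqrt (q * (1 - q)) : ℝ) : ℂ);
     ((Real.sqrt (q * (1 - q)) : ℝ) : ℂ), ((q : ℝ) : ℂ)]

/-- Its pinching `Πρ_q = diag(1−q, q)`. -/
def pinchq (q : ℝ) : Matrix (Fin 2) (Fin 2) ℂ :=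
  Matrix.diagonal ![((1 - q : ℝ) : ℂ), ((q : ℝ) : ℂ)]

lemma diag_conj {m : Type*} [Fintype m] [DecidableEq m] (W : Matrix m m ℂ) (d lam : m → ℂ)
    (h : W * Matrix.diagonal lam = Matrix.diagonal d * W) (f : ℂ → ℂ) :
    W * Matrix.diagonal (f ∘ lam) = Matrix.diagonal (f ∘ d) * W := by
  ext i j
  have h' := congrFun (congrFun h i) j
  simp only [Matrix.mul_diagonal, Matrix.diagonal_mul, Function.comp] at h' ⊢
  by_cases hW : W i j = 0
  · simp [hW]
  · have hl : lam j = d i := by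
      have := mul_comm (d i) (W i j) ▸ h'
      exact mul_left_cancel₀ hW this
    rw [hl, mul_comm]

lemma mlog_diagonal {m : Type*} [Fintype m] [DecidableEq m] (d : m → ℝ) :
    mlog (Matrix.diagonal (fun i => (d i : ℂ))) =
      Matrix.diagonal (fun i => (Real.log (d i) : ℂ)) := by
  have hh : (Matrix.diagonal (fun i => (d i : ℂ))).IsHermitian := by
    refine Matrix.isHermitian_diagonal_iff.2 fun i => ?_
    exact Complex.conj_ofReal _
  rw [mlog, dif_pos hh]
  have hst := (Unitary.conjStarAlgAut_star_apply (S := ℂ) hh.eigenvectorUnitary _).symm.trans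
    hh.conjStarAlgAut_star_eigenvectorUnitary
  have hU : star (hh.eigenvectorUnitary : Matrix m m ℂ) * (hh.eigenvectorUnitary : Matrix m m ℂ) = 1 :=
    Matrix.mem_unitaryGroup_iff'.mp hh.eigenvectorUnitary.2
  have hU' : (hh.eigenvectorUnitary : Matrix m m ℂ) * star (hh.eigenvectorUnitary : Matrix m m ℂ) = 1 :=
    Matrix.mem_unitaryGroup_iff.mp hh.eigenvectorUnitary.2
  set U := (hh.eigenvectorUnitary : Matrix m m ℂ) with hUdef
  have hcomm : U * Matrix.diagonal (RCLike.ofReal ∘ hh.eigenvalues) =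
      Matrix.diagonal (fun i => (d i : ℂ)) * U := by
    rw [← hst, ← mul_assoc, ← mul_assoc, hU', one_mul]
  have key := diag_conj U (fun i => (d i : ℂ)) (RCLike.ofReal ∘ hh.eigenvalues) hcomm
    (fun z => (Real.log z.re : ℂ))
  have e1 : ((fun z : ℂ => (Real.log z.re : ℂ)) ∘ (RCLike.ofReal ∘ hh.eigenvalues)) =
      fun i => (Real.log (hh.eigenvalues i) : ℂ) := by
    funext i
    simp [Function.comp, RCLike.ofReal]
  have e2 : ((fun z : ℂ => (Real.log z.re : ℂ)) ∘ (fun i => ((d i : ℝ) : ℂ))) =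
      fun i => (Real.log (d i) : ℂ) := by
    funext i; simp [Function.comp]
  rw [e1, e2] at key
  show U * Matrix.diagonal (fun i => (Real.log (hh.eigenvalues i) : ℂ)) * star U = _
  rw [key, mul_assoc, hU', mul_one]

lemma mlog_of_idem {m : Type*} [Fintype m] [DecidableEq m] {M : Matrix m m ℂ}
    (hh : M.IsHermitian) (hM : M * M = M) : mlog M = 0 := by
  rw [mlog, dif_pos hh]
  have hst := (Unitary.conjStarAlgAut_star_apply (S := ℂ) hh.eigenvectorUnitary _).symm.trans
    hh.conjStarAlgAut_star_eigenvectorUnitary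
  have hU' : (hh.eigenvectorUnitary : Matrix m m ℂ) * star (hh.eigenvectorUnitary : Matrix m m ℂ) = 1 :=
    Matrix.mem_unitaryGroup_iff.mp hh.eigenvectorUnitary.2
  set U := (hh.eigenvectorUnitary : Matrix m m ℂ) with hUdef
  have hdiag : (Matrix.diagonal (RCLike.ofReal ∘ hh.eigenvalues) : Matrix m m ℂ) *
      Matrix.diagonal (RCLike.ofReal ∘ hh.eigenvalues) =
      Matrix.diagonal (RCLike.ofReal ∘ hh.eigenvalues) := by
    rw [← hst]
    calc star U * M * U * (star U * M * U)
        = star U * (M * (U * star U) * M) * U := by noncomm_ring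
      _ = star U * M * U := by rw [hU', mul_one, hM]
  have hev : ∀ i, Real.log (hh.eigenvalues i) = 0 := by
    intro i
    have h1 := congrFun (congrFun hdiag i) i
    simp only [Matrix.diagonal_mul_diagonal, Matrix.diagonal_apply_eq, Function.comp,
      RCLike.ofReal] at h1
    have h2 : hh.eigenvalues i * hh.eigenvalues i = hh.eigenvalues i := by exact_mod_cast h1
    have h3 : hh.eigenvalues i * (hh.eigenvalues i - 1) = 0 := by ring_nf; linarith [h2]
    rcases mul_eq_zero.mp h3 with h | h
    · rw [h, Real.log_zero]
    · have : hh.eigenvalues i = 1 := by linarith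
      rw [this, Real.log_one]
  have : (Matrix.diagonal (fun i => (Real.log (hh.eigenvalues i) : ℂ))) = 0 := by
    have : (fun i => (Real.log (hh.eigenvalues i) : ℂ)) = fun _ => 0 := by
      funext i; rw [hev i]; simp
    rw [this, Matrix.diagonal_zero]
  rw [this, mul_zero, zero_mul]

lemma part1 (q : ℝ) (hq : q ∈ Set.Ioo (0 : ℝ) (1 / 2)) :
    relEnt (rhoq q) (pinchq q) = -q * Real.log q - (1 - q) * Real.log (1 - q) := by
  obtain ⟨hq0, hq2⟩ := hq
  have hq1 : q < 1 := by linarith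
  have hsq : Real.sqrt (q * (1 - q)) * Real.sqrt (q * (1 - q)) = q * (1 - q) :=
    Real.mul_self_sqrt (by nlinarith)
  have hherm : (rhoq q).IsHermitian := by
    unfold Matrix.IsHermitian
    ext i j
    fin_cases i <;> fin_cases j <;>
      simp [rhoq, Matrix.conjTranspose_apply, Complex.conj_ofReal]
  have hidem : rhoq q * rhoq q = rhoq q := by
    ext i j
    fin_cases i <;> fin_cases j <;>
      · simp [rhoq, Matrix.mul_apply, Fin.sum_univ_two]
        norm_cast
        nlinarith [hsq]
  have hrho0 : mlog (rhoq q) = 0 := mlog_of_idem hherm hidem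
  have hpin : mlog (pinchq q) =
      Matrix.diagonal ![((Real.log (1 - q) : ℝ) : ℂ), ((Real.log q : ℝ) : ℂ)] := by
    have e : pinchq q = Matrix.diagonal (fun i => ((![1 - q, q] : Fin 2 → ℝ) i : ℂ)) := by
      unfold pinchq
      ext i j
      fin_cases i <;> fin_cases j <;> simp [Matrix.diagonal]
    rw [e, mlog_diagonal]
    ext i j
    fin_cases i <;> fin_cases j <;> simp [Matrix.diagonal]
  rw [relEnt, hrho0, hpin, zero_sub]
  simp [Matrix.trace, Matrix.diag, Matrix.mul_apply, Fin.sum_univ_two, Matrix.mul_neg,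
    Matrix.neg_apply, rhoq, Matrix.diagonal_apply]
  ring

lemma key_integral {a c : ℝ} (hc : 0 < c) (hca : c < a) :
    (∀ x ∈ Set.Ici (0:ℝ), HasDerivAt (fun r => (a - c)⁻¹ * (Real.log (c + r) - Real.log (a + r)))
      (((a + x) * (c + x))⁻¹) x) ∧
    Filter.Tendsto (fun r => (a - c)⁻¹ * (Real.log (c + r) - Real.log (a + r)))
      Filter.atTop (nhds 0) := by
  have ha : 0 < a := hc.trans hca
  constructor
  · intro x hx
    have hx0 : (0:ℝ) ≤ x := hx
    have h1 : HasDerivAt (fun r : ℝ => Real.log (c + r)) ((c + x)⁻¹) x := by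
      have := ((hasDerivAt_id x).const_add c).log (by positivity)
      simpa using this
    have h2 : HasDerivAt (fun r : ℝ => Real.log (a + r)) ((a + x)⁻¹) x := by
      have := ((hasDerivAt_id x).const_add a).log (by positivity)
      simpa using this
    have := ((h1.sub h2).const_mul ((a - c)⁻¹))
    refine this.congr_deriv ?_
    have hac : a - c ≠ 0 := by linarith
    have hax : a + x ≠ 0 := by positivity
    have hcx : c + x ≠ 0 := by positivity
    field_simp
    ring
  · have h1 : Filter.Tendsto (fun r : ℝ => (c + r) / (a + r)) Filter.atTop (nhds 1) := by
      have : (fun r : ℝ => (c + r) / (a + r)) =ᶠ[Filter.atTop] fun r => 1 + (c - a) / (a + r) := by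
        filter_upwards [Filter.eventually_gt_atTop (0:ℝ)] with r hr
        field_simp
        ring
      rw [Filter.tendsto_congr' this]
      have h2 : Filter.Tendsto (fun r : ℝ => (c - a) / (a + r)) Filter.atTop (nhds 0) := by
        apply Filter.Tendsto.div_atTop tendsto_const_nhds
        exact Filter.tendsto_atTop_add_const_left _ a Filter.tendsto_id
      simpa using (tendsto_const_nhds (x := (1:ℝ))).add h2
    have h3 : Filter.Tendsto (fun r : ℝ => Real.log (c + r) - Real.log (a + r))
        Filter.atTop (nhds 0) := by
      have heq : (fun r : ℝ => Real.log (c + r) - Real.log (a + r)) =ᶠ[Filter.atTop]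
          fun r => Real.log ((c + r) / (a + r)) := by
        filter_upwards [Filter.eventually_gt_atTop (0:ℝ)] with r hr
        rw [Real.log_div (by positivity) (by positivity)]
      rw [Filter.tendsto_congr' heq]
      have := (Real.continuousAt_log (by norm_num : (1:ℝ) ≠ 0)).tendsto.comp h1
      simpa [Function.comp_def] using this
    simpa using h3.const_mul ((a - c)⁻¹)

lemma key_int_value {a c : ℝ} (hc : 0 < c) (hca : c < a) :
    ∫ r in Set.Ioi (0:ℝ), ((a + r) * (c + r))⁻¹ = (Real.log a - Real.log c) / (a - c) := by
  obtain ⟨hd, ht⟩ := key_integral hc hca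
  have ha : 0 < a := hc.trans hca
  rw [MeasureTheory.integral_Ioi_of_hasDerivAt_of_nonneg' hd
    (fun x hx => by have hx' : (0:ℝ) < x := hx; positivity) ht]
  have hac : a - c ≠ 0 := by linarith
  simp only [add_zero]
  field_simp
  try ring

lemma key_integrable {a c : ℝ} (hc : 0 < c) (hca : c < a) :
    MeasureTheory.IntegrableOn (fun r => ((a + r) * (c + r))⁻¹) (Set.Ioi (0:ℝ)) := by
  obtain ⟨hd, ht⟩ := key_integral hc hca
  have ha : 0 < a := hc.trans hca
  exact MeasureTheory.integrableOn_Ioi_deriv_of_nonneg' hd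
    (fun x hx => by have hx' : (0:ℝ) < x := hx; positivity) ht

lemma one_dim_inv (a : ℝ) (r : ℝ) (h : a + r ≠ 0) :
    ((!![(a : ℂ)] : Matrix (Fin 1) (Fin 1) ℂ) + r • 1)⁻¹ = !![(((a + r)⁻¹ : ℝ) : ℂ)] := by
  apply Matrix.inv_eq_right_inv
  ext i j
  fin_cases i; fin_cases j
  simp [Matrix.mul_apply, Matrix.one_apply, Matrix.smul_apply]
  push_cast
  field_simp
  exact div_self (by exact_mod_cast h)

lemma part2 (q : ℝ) (hq : q ∈ Set.Ioo (0 : ℝ) (1 / 2)) :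
    (((!![((Real.sqrt (q * (1 - q)) : ℝ) : ℂ)] : Matrix (Fin 1) (Fin 1) ℂ)ᴴ *
        Omega (!![((1 - q : ℝ) : ℂ)] : Matrix (Fin 1) (Fin 1) ℂ)
          (!![((q : ℝ) : ℂ)] : Matrix (Fin 1) (Fin 1) ℂ)
          (!![((Real.sqrt (q * (1 - q)) : ℝ) : ℂ)] : Matrix (Fin 1) (Fin 1) ℂ)).trace).re
      = q * (1 - q) * Lmean (1 - q) q := by
  obtain ⟨hq0, hq2⟩ := hq
  have hq1 : q < 1 - q := by linarith
  have ha : (0:ℝ) < 1 - q := by linarith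
  set s := Real.sqrt (q * (1 - q)) with hs
  have hsq : s * s = q * (1 - q) := Real.mul_self_sqrt (by nlinarith)
  have hOmega : Omega (!![((1 - q : ℝ) : ℂ)]) (!![((q : ℝ) : ℂ)]) (!![(s : ℂ)])
      = ((s * ((Real.log (1 - q) - Real.log q) / (1 - q - q))) : ℝ) • (!![(1:ℂ)] : Matrix (Fin 1) (Fin 1) ℂ) := by
    rw [Omega]
    have hcongr : ∀ r ∈ Set.Ioi (0:ℝ),
        ((!![((1 - q : ℝ) : ℂ)] : Matrix (Fin 1) (Fin 1) ℂ) + r • 1)⁻¹ * !![(s : ℂ)] *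
          ((!![((q : ℝ) : ℂ)] : Matrix (Fin 1) (Fin 1) ℂ) + r • 1)⁻¹
        = ((s * (((1 - q) + r) * (q + r))⁻¹ : ℝ)) • (!![(1:ℂ)] : Matrix (Fin 1) (Fin 1) ℂ) := by
      intro r hr
      have hr0 : (0:ℝ) < r := hr
      rw [one_dim_inv (1 - q) r (by positivity), one_dim_inv q r (by positivity)]
      ext i j
      fin_cases i; fin_cases j
      simp [Matrix.mul_apply, Matrix.smul_apply]
      push_cast
      ring
    rw [MeasureTheory.setIntegral_congr_fun measurableSet_Ioi hcongr,
      integral_smul_const]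
    congr 1
    rw [MeasureTheory.integral_const_mul]
    rw [key_int_value hq0 hq1]
  rw [hOmega]
  have htr : ((!![(s:ℂ)] : Matrix (Fin 1) (Fin 1) ℂ)ᴴ *
      (((s * ((Real.log (1 - q) - Real.log q) / (1 - q - q))) : ℝ) • (!![(1:ℂ)] : Matrix (Fin 1) (Fin 1) ℂ))).trace
      = ((s * (s * ((Real.log (1 - q) - Real.log q) / (1 - q - q))) : ℝ) : ℂ) := by
    simp [Matrix.trace, Matrix.mul_apply, Matrix.smul_apply, Complex.conj_ofReal]
    try push_cast
    try ring
  rw [htr, Complex.ofReal_re, ← mul_assoc, hsq, Lmean, if_neg (by intro h; linarith)]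
  try ring_nf

lemma t1 : Filter.Tendsto (fun q : ℝ => Real.log (1 - q) / q) (nhdsWithin 0 (Set.Ioi 0))
    (nhds (-1)) := by
  have hd : HasDerivAt (fun q : ℝ => Real.log (1 - q)) (-1) 0 := by
    have h1 : HasDerivAt (fun q : ℝ => 1 - q) (-1) 0 := by
      simpa using ((hasDerivAt_id (0:ℝ)).const_sub 1)
    have := h1.log (by norm_num)
    simpa using this
  have := hasDerivAt_iff_tendsto_slope.mp hd
  have h2 : Filter.Tendsto (slope (fun q : ℝ => Real.log (1 - q)) 0)
      (nhdsWithin 0 (Set.Ioi 0)) (nhds (-1)) :=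
    this.mono_left (nhdsWithin_mono 0 (fun x hx => Set.mem_compl_singleton_iff.2 (ne_of_gt hx)))
  refine h2.congr fun q => ?_
  simp [slope_def_field]

lemma t2 : Filter.Tendsto (fun q : ℝ => (Real.log q)⁻¹) (nhdsWithin 0 (Set.Ioi 0)) (nhds 0) := by
  have h : Filter.Tendsto (fun q : ℝ => -Real.log q) (nhdsWithin 0 (Set.Ioi 0)) Filter.atTop :=
    Filter.tendsto_neg_atBot_atTop.comp Real.tendsto_log_nhdsGT_zero
  have h2 := h.inv_tendsto_atTop
  have h3 := h2.neg
  simp only [Pi.inv_apply, neg_zero] at h3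
  refine h3.congr fun q => ?_
  show -(-Real.log q)⁻¹ = (Real.log q)⁻¹
  rw [inv_neg, neg_neg]

lemma part3 : Filter.Tendsto
    (fun q : ℝ => relEnt (rhoq q) (pinchq q) / (q * (1 - q) * Lmean (1 - q) q))
    (nhdsWithin 0 (Set.Ioi 0)) (nhds 1) := by
  have tid : Filter.Tendsto (fun q : ℝ => q) (nhdsWithin 0 (Set.Ioi 0)) (nhds 0) :=
    Filter.tendsto_id.mono_left nhdsWithin_le_nhds
  have hA : Filter.Tendsto (fun q : ℝ => 1 + (1 - q) * (Real.log (1 - q) / q) * (Real.log q)⁻¹)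
      (nhdsWithin 0 (Set.Ioi 0)) (nhds 1) := by
    have h := (((tendsto_const_nhds (x := (1:ℝ))).sub tid).mul t1).mul t2
    have h' := (tendsto_const_nhds (x := (1:ℝ))).add h
    simpa using h'
  have hB : Filter.Tendsto (fun q : ℝ =>
      ((1 - q) / (1 - 2 * q)) * (1 - (Real.log (1 - q) / q) * (q * (Real.log q)⁻¹)))
      (nhdsWithin 0 (Set.Ioi 0)) (nhds 1) := by
    have h1 : Filter.Tendsto (fun q : ℝ => (1 - q) / (1 - 2 * q)) (nhdsWithin 0 (Set.Ioi 0))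
        (nhds 1) := by
      have := ((tendsto_const_nhds (x := (1:ℝ))).sub tid).div
        ((tendsto_const_nhds (x := (1:ℝ))).sub (tid.const_mul 2)) (by norm_num)
      simpa [Pi.div_def] using this
    have h2 := (tendsto_const_nhds (x := (1:ℝ))).sub (t1.mul (tid.mul t2))
    have := h1.mul h2
    simpa using this
  have key := hA.div hB one_ne_zero
  rw [div_one] at key
  refine Filter.Tendsto.congr' ?_ key
  have hmem : Set.Ioo (0:ℝ) (1/2) ∈ nhdsWithin (0:ℝ) (Set.Ioi 0) :=
    Ioo_mem_nhdsGT_of_mem ⟨le_refl 0, by norm_num⟩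
  filter_upwards [hmem] with q hq
  obtain ⟨hq0, hq2⟩ := hq
  have hq1 : q < 1 - q := by linarith
  have h1q : (0:ℝ) < 1 - q := by linarith
  have h12q : (0:ℝ) < 1 - 2 * q := by linarith
  have hlq : Real.log q < 0 := Real.log_neg hq0 (by linarith)
  have hll : Real.log q < Real.log (1 - q) := Real.log_lt_log hq0 hq1
  rw [part1 q ⟨hq0, hq2⟩, Lmean, if_neg (by intro h; linarith)]
  have hd : 1 - q - q = 1 - 2 * q := by ring
  rw [hd]
  have hlqne : Real.log q ≠ 0 := ne_of_lt hlq
  have hsub : Real.log (1 - q) - Real.log q ≠ 0 := by linarith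
  have hq0' : q ≠ 0 := hq0.ne'
  have h12q' : (1:ℝ) - 2 * q ≠ 0 := h12q.ne'
  have h1q' : (1:ℝ) - q ≠ 0 := h1q.ne'
  simp only [Pi.div_apply]
  have hx : -(q * Real.log q) ≠ 0 := by
    exact neg_ne_zero.2 (mul_ne_zero hq0' hlqne)
  have hA2 : 1 + (1 - q) * (Real.log (1 - q) / q) * (Real.log q)⁻¹
      = (-q * Real.log q - (1 - q) * Real.log (1 - q)) / (-(q * Real.log q)) := by
    field_simp
    ring
  have hB2 : (1 - q) / (1 - 2 * q) * (1 - Real.log (1 - q) / q * (q * (Real.log q)⁻¹))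
      = (q * (1 - q) * ((Real.log (1 - q) - Real.log q) / (1 - 2 * q))) / (-(q * Real.log q)) := by
    field_simp
    ring
  rw [hA2, hB2, div_div_div_comm, div_self hx, div_one]

/-- On the two-level family: the relative entropy equals the binary entropy, the BKM
form equals `q(1−q) L(1−q,q)`, and their ratio tends to `1` as `q → 0⁺`. -/
theorem two_level_bkm_asymptotics :
    (∀ q : ℝ, q ∈ Set.Ioo (0 : ℝ) (1 / 2) →
      relEnt (rhoq q) (pinchq q)
        = -q * Real.log q - (1 - q) * Real.log (1 - q)) ∧
    (∀ q : ℝ, q ∈ Set.Ioo (0 : ℝ) (1 / 2) →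
      (((!![((Real.sqrt (q * (1 - q)) : ℝ) : ℂ)] : Matrix (Fin 1) (Fin 1) ℂ)ᴴ *
          Omega (!![((1 - q : ℝ) : ℂ)] : Matrix (Fin 1) (Fin 1) ℂ)
            (!![((q : ℝ) : ℂ)] : Matrix (Fin 1) (Fin 1) ℂ)
            (!![((Real.sqrt (q * (1 - q)) : ℝ) : ℂ)] : Matrix (Fin 1) (Fin 1) ℂ)).trace).re
        = q * (1 - q) * Lmean (1 - q) q) ∧
    Filter.Tendsto
      (fun q : ℝ => relEnt (rhoq q) (pinchq q) / (q * (1 - q) * Lmean (1 - q) q))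
      (nhdsWithin 0 (Set.Ioi 0)) (nhds 1) :=
  ⟨part1, part2, part3⟩
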